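/- Let T be a simple tile of a periodic solution with minimal temporal period τ and minimal spatial period σ. If an integer s ≤ n is the number of distinct states in T, then s = τσ/d for some divisor d of gcd(τ,σ). Conversely, for every divisor d of gcd(τ,σ) with τσ/d ≤ n, there exists a simple tile with exactly τσ/d distinct states. -/

import Mathlib

/-- The set of distinct states appearing in a tile. -/
def states (n τ σ : ℕ) [NeZero τ] [NeZero σ] (T : ZMod τ → ZMod σ → ZMod n) :
    Finset (ZMod n) :=
  Finset.image (fun p : ZMod τ × ZMod σ => T p.1 p.2) Finset.univ

/-- The set of distinct row-adjacent pairs appearing in a tile (the assignments). -/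
def pairs (n τ σ : ℕ) [NeZero τ] [NeZero σ] (T : ZMod τ → ZMod σ → ZMod n) :
    Finset (ZMod n × ZMod n) :=
  Finset.image (fun p : ZMod τ × ZMod σ => (T p.1 p.2, T p.1 (p.2 + 1))) Finset.univ

/-- `T` is generated by the rule `f`. -/
def GenBy (n τ σ : ℕ) (f : ZMod n → ZMod n → ZMod n) (T : ZMod τ → ZMod σ → ZMod n) : Prop :=
  ∀ i j, T (i + 1) (j + 1) = f (T i j) (T i (j + 1))

/-- The temporal period `τ` of `T` is minimal: no nonzero temporal shift fixes `T`. -/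
def MinTemporal (n τ σ : ℕ) (T : ZMod τ → ZMod σ → ZMod n) : Prop :=
  ∀ t : ZMod τ, t ≠ 0 → ∃ i j, T (i + t) j ≠ T i j

/-- The spatial period `σ` of `T` is minimal: no nonzero spatial shift fixes `T`. -/
def MinSpatial (n τ σ : ℕ) (T : ZMod τ → ZMod σ → ZMod n) : Prop :=
  ∀ c : ZMod σ, c ≠ 0 → ∃ i j, T i (j + c) ≠ T i j

/-- `T` is simple: its assignment number equals its number of states. -/
def Simple (n τ σ : ℕ) [NeZero τ] [NeZero σ] (T : ZMod τ → ZMod σ → ZMod n) : Prop :=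
  (pairs n τ σ T).card = (states n τ σ T).card

section Aux
set_option linter.unusedSectionVars false
set_option maxHeartbeats 1000000

variable {n τ σ : ℕ} [NeZero n] [NeZero τ] [NeZero σ]
variable {f : ZMod n → ZMod n → ZMod n} {T : ZMod τ → ZMod σ → ZMod n}

/- ### Forward direction -/

lemma STC.states_eq_pairs_image :
    states n τ σ T = (pairs n τ σ T).image Prod.fst := by
  unfold states pairs
  rw [Finset.image_image]
  rfl

lemma STC.spatial_step (hS : Simple n τ σ T) {i i' : ZMod τ} {j j' : ZMod σ}
    (h : T i j = T i' j') : T i (j + 1) = T i' (j' + 1) := by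
  classical
  have hinj : Set.InjOn Prod.fst (pairs n τ σ T : Set (ZMod n × ZMod n)) := by
    apply Finset.injOn_of_card_image_eq
    rw [← STC.states_eq_pairs_image, hS]
  have h1 : (T i j, T i (j + 1)) ∈ pairs n τ σ T :=
    Finset.mem_image.2 ⟨(i, j), Finset.mem_univ _, rfl⟩
  have h2 : (T i' j', T i' (j' + 1)) ∈ pairs n τ σ T :=
    Finset.mem_image.2 ⟨(i', j'), Finset.mem_univ _, rfl⟩
  exact congrArg Prod.snd (hinj h1 h2 h)

lemma STC.diag_step (hG : GenBy n τ σ f T) (hS : Simple n τ σ T) {i i' : ZMod τ} {j j' : ZMod σ}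
    (h : T i j = T i' j') : T (i + 1) (j + 1) = T (i' + 1) (j' + 1) := by
  rw [hG i j, hG i' j', h, STC.spatial_step hS h]

lemma STC.diag_iter (hG : GenBy n τ σ f T) (hS : Simple n τ σ T) {i i' : ZMod τ} {j j' : ZMod σ}
    (h : T i j = T i' j') (k : ℕ) :
    T (i + (k : ZMod τ)) (j + (k : ZMod σ)) = T (i' + (k : ZMod τ)) (j' + (k : ZMod σ)) := by
  induction k with
  | zero => simpa using h
  | succ m ih =>
      have : ∀ (a : ZMod τ) (b : ZMod σ),
          T (a + ((m + 1 : ℕ) : ZMod τ)) (b + ((m + 1 : ℕ) : ZMod σ)) =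
          T ((a + (m : ZMod τ)) + 1) ((b + (m : ZMod σ)) + 1) := by
        intro a b; push_cast; ring_nf
      rw [this i j, this i' j']
      exact STC.diag_step hG hS ih

lemma STC.sp_iter (hS : Simple n τ σ T) {i i' : ZMod τ} {j j' : ZMod σ}
    (h : T i j = T i' j') (k : ℕ) :
    T i (j + (k : ZMod σ)) = T i' (j' + (k : ZMod σ)) := by
  induction k with
  | zero => simpa using h
  | succ m ih =>
      have : ∀ (b : ZMod σ), b + ((m + 1 : ℕ) : ZMod σ) = (b + (m : ZMod σ)) + 1 := by
        intro b; push_cast; ring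
      rw [this j, this j']
      exact STC.spatial_step hS ih

lemma STC.key (hG : GenBy n τ σ f T) (hS : Simple n τ σ T) {i i' : ZMod τ} {j j' : ZMod σ}
    (h : T i j = T i' j') (a : ZMod τ) (b : ZMod σ) :
    T (i + a) (j + b) = T (i' + a) (j' + b) := by
  set k1 := a.val with hk1
  set k2 := (b - (k1 : ZMod σ)).val with hk2
  have ha : ((k1 : ℕ) : ZMod τ) = a := ZMod.natCast_zmod_val a
  have hb : ((k1 : ℕ) : ZMod σ) + ((k2 : ℕ) : ZMod σ) = b := by
    rw [hk2, ZMod.natCast_zmod_val]; ring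
  have step1 := STC.diag_iter hG hS h k1
  have step2 := STC.sp_iter hS step1 k2
  calc T (i + a) (j + b) = T (i + (k1 : ZMod τ)) ((j + (k1 : ZMod σ)) + (k2 : ZMod σ)) := by
        rw [ha, add_assoc, hb]
    _ = T (i' + (k1 : ZMod τ)) ((j' + (k1 : ZMod σ)) + (k2 : ZMod σ)) := step2
    _ = T (i' + a) (j' + b) := by rw [ha, add_assoc, hb]

def STC.stab (T : ZMod τ → ZMod σ → ZMod n)
    (hkey : ∀ {i i' : ZMod τ} {j j' : ZMod σ}, T i j = T i' j' →
      ∀ (a : ZMod τ) (b : ZMod σ), T (i + a) (j + b) = T (i' + a) (j' + b)) :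
    AddSubgroup (ZMod τ × ZMod σ) where
  carrier := {p | T p.1 p.2 = T 0 0}
  zero_mem' := rfl
  add_mem' := by
    intro a b ha hb
    have h1 := hkey (hb : T b.1 b.2 = T 0 0) a.1 a.2
    have : T (a.1 + b.1) (a.2 + b.2) = T a.1 a.2 := by simpa [add_comm] using h1
    exact this.trans ha
  neg_mem' := by
    intro a ha
    have := hkey (ha : T a.1 a.2 = T 0 0).symm (-a.1) (-a.2)
    simpa using this

lemma STC.mem_stab_iff
    (hkey : ∀ {i i' : ZMod τ} {j j' : ZMod σ}, T i j = T i' j' →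
      ∀ (a : ZMod τ) (b : ZMod σ), T (i + a) (j + b) = T (i' + a) (j' + b))
    {p q : ZMod τ × ZMod σ} :
    T q.1 q.2 = T p.1 p.2 ↔ q - p ∈ STC.stab T hkey := by
  constructor
  · intro h
    have := hkey h (-p.1) (-p.2)
    show T (q - p).1 (q - p).2 = T 0 0
    simpa [sub_eq_add_neg] using this
  · intro h
    have := hkey (h : T (q.1 - p.1) (q.2 - p.2) = T 0 0) p.1 p.2
    simpa [sub_add_cancel] using this

theorem STC.forward_count (hG : GenBy n τ σ f T) (hT : MinTemporal n τ σ T)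
    (hSp : MinSpatial n τ σ T) (hS : Simple n τ σ T) :
    ∃ d, d ∣ Nat.gcd τ σ ∧ (states n τ σ T).card * d = τ * σ := by
  classical
  have hkey : ∀ {i i' : ZMod τ} {j j' : ZMod σ}, T i j = T i' j' →
      ∀ (a : ZMod τ) (b : ZMod σ), T (i + a) (j + b) = T (i' + a) (j' + b) :=
    fun h a b => STC.key hG hS h a b
  set H := STC.stab T hkey with hH
  let Q := (ZMod τ × ZMod σ) ⧸ H
  let φ : Q → ZMod n := fun q => Quotient.liftOn' q (fun p => T p.1 p.2) (by
    intro x y hxy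
    rw [QuotientAddGroup.leftRel_apply] at hxy
    have : y - x ∈ H := by simpa [sub_eq_neg_add] using hxy
    exact ((STC.mem_stab_iff hkey).2 this).symm)
  have hφmk : ∀ p : ZMod τ × ZMod σ, φ (QuotientAddGroup.mk p) = T p.1 p.2 := fun p => rfl
  have hφinj : Function.Injective φ := by
    intro q q'
    induction q using QuotientAddGroup.induction_on
    induction q' using QuotientAddGroup.induction_on
    rename_i x y
    intro h
    rw [hφmk, hφmk] at h
    have : y - x ∈ H := (STC.mem_stab_iff hkey).1 (h.symm : T y.1 y.2 = T x.1 x.2)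
    refine (QuotientAddGroup.eq (s := H)).2 ?_
    simpa [sub_eq_neg_add] using this
  have hrange : Set.range φ = (states n τ σ T : Set (ZMod n)) := by
    unfold states
    ext x
    simp only [Set.mem_range, Finset.coe_image, Finset.coe_univ, Set.image_univ]
    constructor
    · rintro ⟨q, rfl⟩
      obtain ⟨p, rfl⟩ := QuotientAddGroup.mk_surjective q
      exact ⟨p, rfl⟩
    · rintro ⟨p, rfl⟩
      exact ⟨QuotientAddGroup.mk p, rfl⟩
  have hcardQ : (states n τ σ T).card = Nat.card Q :=
    calc (states n τ σ T).card = ((states n τ σ T : Set (ZMod n))).ncard :=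
          (Set.ncard_coe_finset _).symm
      _ = Nat.card (states n τ σ T : Set (ZMod n)) := (Nat.card_coe_set_eq _).symm
      _ = Nat.card (Set.range φ) := by rw [hrange]
      _ = Nat.card Q := Nat.card_range_of_injective hφinj
  refine ⟨Nat.card H, ?_, ?_⟩
  · have hτ0 : ∀ t : ZMod τ, ((t, (0:ZMod σ)) ∈ H) → t = 0 := by
      intro t ht
      by_contra hne
      obtain ⟨i, j, hij⟩ := hT t hne
      exact hij (by simpa [add_comm] using hkey (ht : T t 0 = T 0 0) i j)
    have hσ0 : ∀ c : ZMod σ, (((0:ZMod τ), c) ∈ H) → c = 0 := by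
      intro c hc
      by_contra hne
      obtain ⟨i, j, hij⟩ := hSp c hne
      exact hij (by simpa [add_comm] using hkey (hc : T 0 c = T 0 0) i j)
    have d1 : Nat.card H ∣ τ := by
      have : Nat.card H ∣ Nat.card (ZMod τ) := by
        apply AddSubgroup.card_dvd_of_injective
          ((AddMonoidHom.fst (ZMod τ) (ZMod σ)).comp H.subtype)
        intro x y hxy
        have hmem : ((x : ZMod τ × ZMod σ) - y) ∈ H := sub_mem x.2 y.2
        have h1 : ((x : ZMod τ × ZMod σ) - y).1 = 0 := by
          simpa [sub_eq_zero] using (hxy : (x : ZMod τ × ZMod σ).1 = (y : ZMod τ × ZMod σ).1)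
        have h2 : ((x : ZMod τ × ZMod σ) - y).2 = 0 := by
          apply hσ0
          have heq : ((0:ZMod τ), ((x : ZMod τ × ZMod σ) - y).2) = (x : ZMod τ × ZMod σ) - y := by
            rw [← h1]
          rw [heq]; exact hmem
        have : (x : ZMod τ × ZMod σ) = y := by
          rw [← sub_eq_zero]; exact Prod.ext_iff.2 ⟨h1, h2⟩
        exact Subtype.ext this
      simpa [Nat.card_zmod] using this
    have d2 : Nat.card H ∣ σ := by
      have : Nat.card H ∣ Nat.card (ZMod σ) := by
        apply AddSubgroup.card_dvd_of_injective
          ((AddMonoidHom.snd (ZMod τ) (ZMod σ)).comp H.subtype)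
        intro x y hxy
        have hmem : ((x : ZMod τ × ZMod σ) - y) ∈ H := sub_mem x.2 y.2
        have h2 : ((x : ZMod τ × ZMod σ) - y).2 = 0 := by
          simpa [sub_eq_zero] using (hxy : (x : ZMod τ × ZMod σ).2 = (y : ZMod τ × ZMod σ).2)
        have h1 : ((x : ZMod τ × ZMod σ) - y).1 = 0 := by
          apply hτ0
          have heq : (((x : ZMod τ × ZMod σ) - y).1, (0:ZMod σ)) = (x : ZMod τ × ZMod σ) - y := by
            rw [← h2]
          rw [heq]; exact hmem
        have : (x : ZMod τ × ZMod σ) = y := by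
          rw [← sub_eq_zero]; exact Prod.ext_iff.2 ⟨h1, h2⟩
        exact Subtype.ext this
      simpa [Nat.card_zmod] using this
    exact Nat.dvd_gcd d1 d2
  · rw [hcardQ]
    have hlag := (AddSubgroup.card_eq_card_quotient_mul_card_addSubgroup H).symm
    calc Nat.card Q * Nat.card H = Nat.card (ZMod τ × ZMod σ) := hlag
      _ = τ * σ := by simp [Nat.card_prod, Nat.card_zmod]

/- ### Converse direction -/

def STC.iotaF (n t : ℕ) (σ : ℕ) [NeZero σ] : ℕ × ZMod σ → ZMod n :=
  fun q => ((q.1 + t * q.2.val : ℕ) : ZMod n)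

def STC.decodeF (t : ℕ) (σ : ℕ) [NeZero σ] {n : ℕ} (x : ZMod n) : ℕ × ZMod σ :=
  (x.val % t, ((x.val / t : ℕ) : ZMod σ))

lemma STC.decode_iota {t : ℕ} (ht : 0 < t) (hn : t * σ ≤ n) {q : ℕ × ZMod σ} (hq : q.1 < t) :
    STC.decodeF t σ (STC.iotaF n t σ q) = q := by
  obtain ⟨r, m⟩ := q
  simp only at hq
  have hval : (r + t * m.val) < n := by
    calc r + t * m.val < t + t * m.val := by omega
      _ = t * (m.val + 1) := by ring
      _ ≤ t * σ := Nat.mul_le_mul_left t (by have := ZMod.val_lt m; omega)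
      _ ≤ n := hn
  have h1 : (STC.iotaF n t σ (r, m)).val = r + t * m.val := ZMod.val_cast_of_lt hval
  unfold STC.decodeF
  rw [h1]
  have h2 : (r + t * m.val) % t = r := by
    rw [Nat.add_mul_mod_self_left, Nat.mod_eq_of_lt hq]
  have h3 : (r + t * m.val) / t = m.val := by
    rw [Nat.add_mul_div_left _ _ ht, Nat.div_eq_of_lt hq, zero_add]
  rw [h2, h3, ZMod.natCast_zmod_val]

def STC.psiF (τ σ t b : ℕ) [NeZero τ] [NeZero σ] : ZMod τ → ZMod σ → ℕ × ZMod σ :=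
  fun i j => (i.val % t, j - ((i.val / t * b : ℕ) : ZMod σ))

def STC.FdF (t b : ℕ) (σ : ℕ) [NeZero σ] : ℕ × ZMod σ → ℕ × ZMod σ :=
  fun q => if q.1 + 1 = t then (0, q.2 + 1 - (b : ZMod σ)) else (q.1 + 1, q.2 + 1)

lemma STC.psi_fst_lt {t b : ℕ} (ht : 0 < t) (i : ZMod τ) (j : ZMod σ) :
    (STC.psiF τ σ t b i j).1 < t := Nat.mod_lt _ ht

lemma STC.val_add_one' (i : ZMod τ) : (i + 1).val = (i.val + 1) % τ := by
  rw [ZMod.val_add, ZMod.val_one_eq_one_mod, Nat.add_mod_mod]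

lemma STC.step_sp {t b : ℕ} (i : ZMod τ) (j : ZMod σ) :
    STC.psiF τ σ t b i (j + 1) = ((STC.psiF τ σ t b i j).1, (STC.psiF τ σ t b i j).2 + 1) := by
  simp only [STC.psiF]
  refine Prod.ext rfl ?_
  ring

lemma STC.step_diag {t b d : ℕ} (ht : 0 < t) (hb : 0 < b) (hτ : τ = t * d) (hσ : σ = b * d)
    (i : ZMod τ) (j : ZMod σ) :
    STC.psiF τ σ t b (i + 1) (j + 1) = STC.FdF t b σ (STC.psiF τ σ t b i j) := by
  obtain ⟨d, rfl⟩ : ∃ d', d = d' + 1 := by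
    rcases d with _ | d'
    · exact absurd (by rw [hτ, mul_zero]) (NeZero.ne τ)
    · exact ⟨d', rfl⟩
  set v := i.val with hvdef
  have hv : v < τ := ZMod.val_lt i
  have hiv : (i + 1).val = (v + 1) % τ := STC.val_add_one' i
  rcases Nat.lt_or_ge (v + 1) τ with hlt | hge
  · have hiv' : (i + 1).val = v + 1 := by rw [hiv, Nat.mod_eq_of_lt hlt]
    have hdm := Nat.div_add_mod v t
    by_cases hc : v % t + 1 = t
    · have hv1 : v + 1 = t * (v / t + 1) := by
        have : t * (v / t + 1) = t * (v / t) + t := by ring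
        omega
      have e1 : (v + 1) % t = 0 := by rw [hv1, Nat.mul_mod_right]
      have e2 : (v + 1) / t = v / t + 1 := by rw [hv1, Nat.mul_div_cancel_left _ ht]
      simp only [STC.psiF, STC.FdF, hiv', ← hvdef, hc, if_pos, e1, e2]
      refine Prod.ext rfl ?_
      push_cast
      ring
    · have hmlt : v % t + 1 < t := by
        have := Nat.mod_lt v ht
        omega
      have hv1 : v + 1 = t * (v / t) + (v % t + 1) := by omega
      have e1 : (v + 1) % t = v % t + 1 := by
        rw [hv1, Nat.mul_add_mod, Nat.mod_eq_of_lt hmlt]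
      have e2 : (v + 1) / t = v / t := by
        rw [hv1, Nat.mul_add_div ht, Nat.div_eq_of_lt hmlt, add_zero]
      simp only [STC.psiF, STC.FdF, hiv', ← hvdef, e1, e2, if_neg hc]
      refine Prod.ext rfl ?_
      ring
  · have hveq : v = t * d + (t - 1) := by
      have : t * (d + 1) = t * d + t := by ring
      omega
    have e0 : (i + 1).val = 0 := by
      have : v + 1 = τ := by omega
      rw [hiv, this, Nat.mod_self]
    have evm : v % t = t - 1 := by
      rw [hveq, Nat.mul_add_mod, Nat.mod_eq_of_lt (by omega)]
    have evd : v / t = d := by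
      rw [hveq, Nat.mul_add_div ht, Nat.div_eq_of_lt (by omega), add_zero]
    have hz : ((d * b + b : ℕ) : ZMod σ) = 0 := by
      have : d * b + b = σ := by rw [hσ]; ring
      rw [this, ZMod.natCast_self]
    have hc2 : t - 1 + 1 = t := by omega
    simp only [STC.psiF, STC.FdF, e0, ← hvdef, evm, evd, hc2, Nat.zero_mod, Nat.zero_div,
      Nat.zero_mul, Nat.cast_zero, sub_zero, if_pos]
    refine Prod.ext rfl ?_
    have hz' : ((d * b : ℕ) : ZMod σ) + ((b : ℕ) : ZMod σ) = 0 := by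
      rw [← Nat.cast_add, hz]
    push_cast at hz' ⊢
    linear_combination hz'

theorem STC.converse_part (d : ℕ) (hd : d ∣ Nat.gcd τ σ) (hn : τ * σ / d ≤ n) :
    ∃ (f : ZMod n → ZMod n → ZMod n) (T : ZMod τ → ZMod σ → ZMod n),
      GenBy n τ σ f T ∧ MinTemporal n τ σ T ∧ MinSpatial n τ σ T ∧ Simple n τ σ T ∧
      (states n τ σ T).card = τ * σ / d := by
  classical
  have hdτ : d ∣ τ := hd.trans (Nat.gcd_dvd_left τ σ)
  have hdσ : d ∣ σ := hd.trans (Nat.gcd_dvd_right τ σ)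
  have dpos : 0 < d := by
    rcases Nat.eq_zero_or_pos d with h | h
    · subst h
      have : Nat.gcd τ σ = 0 := Nat.eq_zero_of_zero_dvd hd
      exact absurd (Nat.eq_zero_of_gcd_eq_zero_left this) (NeZero.ne τ)
    · exact h
  set t := τ / d with htdef
  set b := σ / d with hbdef
  have hτ : τ = t * d := (Nat.div_mul_cancel hdτ).symm
  have hσ : σ = b * d := (Nat.div_mul_cancel hdσ).symm
  have ht : 0 < t := by
    rcases Nat.eq_zero_or_pos t with h | h
    · exact absurd (by rw [hτ, h, zero_mul]) (NeZero.ne τ)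
    · exact h
  have hb : 0 < b := by
    rcases Nat.eq_zero_or_pos b with h | h
    · exact absurd (by rw [hσ, h, zero_mul]) (NeZero.ne σ)
    · exact h
  have hts : τ * σ / d = t * σ := by
    rw [hτ, show t * d * σ = t * σ * d from by ring, Nat.mul_div_cancel _ dpos]
  have htσn : t * σ ≤ n := by rw [← hts]; exact hn
  set T : ZMod τ → ZMod σ → ZMod n := fun i j => STC.iotaF n t σ (STC.psiF τ σ t b i j) with hT
  have hinj : ∀ {p q : ℕ × ZMod σ}, p.1 < t → q.1 < t →
      STC.iotaF n t σ p = STC.iotaF n t σ q → p = q := by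
    intro p q hp hq h
    rw [← STC.decode_iota ht htσn hp, ← STC.decode_iota ht htσn hq, h]
  have hTpsi : ∀ i j i' j', T i j = T i' j' → STC.psiF τ σ t b i j = STC.psiF τ σ t b i' j' := by
    intro i j i' j' h
    exact hinj (STC.psi_fst_lt ht i j) (STC.psi_fst_lt ht i' j') h
  set g : ZMod n → ZMod n := fun x =>
    STC.iotaF n t σ ((STC.decodeF t σ x).1, (STC.decodeF t σ x).2 + 1) with hg
  have hgstep : ∀ i j, T i (j + 1) = g (T i j) := by
    intro i j
    show STC.iotaF n t σ (STC.psiF τ σ t b i (j + 1)) = _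
    rw [STC.step_sp, hg]
    simp only
    rw [STC.decode_iota ht htσn (STC.psi_fst_lt ht i j)]
  refine ⟨fun x _ => STC.iotaF n t σ (STC.FdF t b σ (STC.decodeF t σ x)), T, ?_, ?_, ?_, ?_, ?_⟩
  · intro i j
    show STC.iotaF n t σ (STC.psiF τ σ t b (i + 1) (j + 1)) = _
    rw [STC.step_diag ht hb hτ hσ]
    simp only
    rw [STC.decode_iota ht htσn (STC.psi_fst_lt ht i j)]
  · intro t_ ht_
    refine ⟨0, 0, ?_⟩
    rw [zero_add]
    intro h
    have hps := hTpsi _ _ _ _ h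
    simp only [STC.psiF, ZMod.val_zero, Nat.zero_mod, Nat.zero_div, Nat.zero_mul,
      Nat.cast_zero, sub_zero] at hps
    have h1 : t_.val % t = 0 := congrArg Prod.fst hps
    have h2 : ((t_.val / t * b : ℕ) : ZMod σ) = 0 := by
      have := congrArg Prod.snd hps
      simp only at this
      have h0 : (0 : ZMod σ) - ((t_.val / t * b : ℕ) : ZMod σ) = 0 := this
      linear_combination -h0
    have hdvd : σ ∣ t_.val / t * b := (ZMod.natCast_eq_zero_iff _ _).1 h2
    have hlt : t_.val / t * b < σ := by
      have hv : t_.val < τ := ZMod.val_lt t_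
      have hq : t_.val / t < d := by
        rw [Nat.div_lt_iff_lt_mul ht]
        calc t_.val < τ := hv
          _ = d * t := by rw [hτ]; ring
      calc t_.val / t * b < d * b := Nat.mul_lt_mul_of_lt_of_le hq (le_refl b) hb
        _ = σ := by rw [hσ]; ring
    have := Nat.eq_zero_of_dvd_of_lt hdvd (by omega)
    have hq0 : t_.val / t = 0 := by
      rcases Nat.mul_eq_zero.1 this with h | h
      · exact h
      · omega
    have : t_.val < t := ((Nat.div_eq_zero_iff).1 hq0).resolve_left (by omega)
    have : t_.val = 0 := by rw [← h1, Nat.mod_eq_of_lt this]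
    exact ht_ (by rwa [← ZMod.val_eq_zero])
  · intro c hc
    refine ⟨0, 0, ?_⟩
    rw [zero_add]
    intro h
    have hps := hTpsi _ _ _ _ h
    have h2 := congrArg Prod.snd hps
    simp only [STC.psiF] at h2
    exact hc (by linear_combination h2)
  · show (pairs n τ σ T).card = (states n τ σ T).card
    have hrw : (fun p : ZMod τ × ZMod σ => (T p.1 p.2, T p.1 (p.2 + 1))) =
        (fun x => (x, g x)) ∘ (fun p : ZMod τ × ZMod σ => T p.1 p.2) := by
      funext p
      simp only [Function.comp_apply]
      rw [hgstep]
    unfold pairs states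
    rw [hrw, ← Finset.image_image]
    exact Finset.card_image_of_injective _ (fun a b hab => congrArg Prod.fst hab)
  · rw [hts]
    unfold states
    have himg : Finset.image (fun p : ZMod τ × ZMod σ => STC.psiF τ σ t b p.1 p.2) Finset.univ =
        Finset.range t ×ˢ (Finset.univ : Finset (ZMod σ)) := by
      ext q
      simp only [Finset.mem_image, Finset.mem_univ, true_and, Finset.mem_product,
        Finset.mem_range, and_true]
      constructor
      · rintro ⟨p, rfl⟩
        exact STC.psi_fst_lt ht p.1 p.2
      · intro hq
        refine ⟨((q.1 : ZMod τ), q.2), ?_⟩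
        have hvq : ((q.1 : ℕ) : ZMod τ).val = q.1 := by
          apply ZMod.val_cast_of_lt
          calc q.1 < t := hq
            _ ≤ t * d := Nat.le_mul_of_pos_right t dpos
            _ = τ := hτ.symm
        simp only [STC.psiF, hvq, Nat.mod_eq_of_lt hq, Nat.div_eq_of_lt hq, Nat.zero_mul,
          Nat.cast_zero, sub_zero]
    have : (fun p : ZMod τ × ZMod σ => T p.1 p.2) =
        STC.iotaF n t σ ∘ (fun p : ZMod τ × ZMod σ => STC.psiF τ σ t b p.1 p.2) := rfl
    rw [this, ← Finset.image_image, himg]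
    rw [Finset.card_image_of_injOn]
    · rw [Finset.card_product, Finset.card_range, Finset.card_univ, ZMod.card]
    · intro p hp q hq h
      simp only [Finset.coe_product, Finset.coe_range, Set.mem_prod, Set.mem_Iio] at hp hq
      exact hinj hp.1 hq.1 h

end Aux

/-- An integer `s ≤ n` is the number of distinct states in a simple tile of a
periodic solution with minimal periods `τ` and `σ` if and only if `s = τσ/d` for
some divisor `d` of `gcd(τ,σ)`. -/
theorem simple_tile_state_counts (n τ σ : ℕ) [NeZero n] [NeZero τ] [NeZero σ] :
    (∀ (f : ZMod n → ZMod n → ZMod n) (T : ZMod τ → ZMod σ → ZMod n),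
      GenBy n τ σ f T → MinTemporal n τ σ T → MinSpatial n τ σ T → Simple n τ σ T →
      ∀ s : ℕ, s ≤ n → (states n τ σ T).card = s →
        ∃ d, d ∣ Nat.gcd τ σ ∧ s * d = τ * σ) ∧
    (∀ d : ℕ, d ∣ Nat.gcd τ σ → τ * σ / d ≤ n →
      ∃ (f : ZMod n → ZMod n → ZMod n) (T : ZMod τ → ZMod σ → ZMod n),
        GenBy n τ σ f T ∧ MinTemporal n τ σ T ∧ MinSpatial n τ σ T ∧ Simple n τ σ T ∧
        (states n τ σ T).card = τ * σ / d) := by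
  constructor
  · intro f T hG hT hSp hS s _ hcard
    obtain ⟨d, hd1, hd2⟩ := STC.forward_count hG hT hSp hS
    exact ⟨d, hd1, by rw [← hcard]; exact hd2⟩
  · intro d hd hn
    exact STC.converse_part d hd hn
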